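/- Let V(r) = r²/2 + r³/3 + A r⁴/4 with A > 0 and let β > 0. Then the equation ∫_ℝ r e^{−θr − βV(r)} dr = 0 admits exactly one real solution θ. -/

import Mathlib

noncomputable section

open Real MeasureTheory Set Filter

def Vpot (A r : ℝ) : ℝ := r ^ 2 / 2 + r ^ 3 / 3 + A * r ^ 4 / 4

namespace Stmt14

variable {A β : ℝ}

lemma contVpot : Continuous (Vpot A) := by
  unfold Vpot; fun_prop

lemma tail_nonpos (hA : 0 < A) (hβ : 0 < β) (c : ℝ) {r : ℝ}
    (hr : max 1 ((|c| + 1 + β) * 4 / (β * A)) ≤ |r|) :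
    c * |r| + r ^ 2 - β * Vpot A r ≤ 0 := by
  set x := |r| with hx
  have hβA : 0 < β * A := mul_pos hβ hA
  have hx1 : 1 ≤ x := le_trans (le_max_left _ _) hr
  have hx0 : 0 ≤ x := by linarith
  have hdiv : (|c| + 1 + β) * 4 ≤ β * A * x := by
    have h2 : (|c| + 1 + β) * 4 / (β * A) ≤ x := le_trans (le_max_right _ _) hr
    rw [div_le_iff₀ hβA] at h2; linarith
  have hc : c ≤ |c| := le_abs_self c
  have hr2 : r ^ 2 = x ^ 2 := (sq_abs r).symm
  have hr4 : r ^ 4 = x ^ 4 := by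
    rw [hx, ← abs_pow, abs_of_nonneg (by positivity)]
  have hr3 : -x ^ 3 ≤ r ^ 3 := by
    rw [hx, ← abs_pow]; exact neg_abs_le _
  have hx3 : x ≤ x ^ 3 := by nlinarith
  have hx23 : x ^ 2 ≤ x ^ 3 := by nlinarith
  have key : (|c| + 1 + β) * x ^ 3 ≤ β * A / 4 * x ^ 4 := by nlinarith [pow_nonneg hx0 3]
  unfold Vpot
  rw [hr2, hr4]
  nlinarith [abs_nonneg c, pow_nonneg hx0 3]


lemma exists_bound (hA : 0 < A) (hβ : 0 < β) (c : ℝ) :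
    ∃ K : ℝ, ∀ r : ℝ, c * |r| + r ^ 2 - β * Vpot A r ≤ K := by
  have hcont : Continuous fun r : ℝ => c * |r| + r ^ 2 - β * Vpot A r := by
    have := contVpot (A := A); fun_prop
  have hev : ∀ᶠ r in cocompact ℝ,
      c * |r| + r ^ 2 - β * Vpot A r ≤ c * |(0:ℝ)| + (0:ℝ) ^ 2 - β * Vpot A 0 := by
    rw [cocompact_eq_atBot_atTop, eventually_sup]
    have h0 : c * |(0:ℝ)| + (0:ℝ) ^ 2 - β * Vpot A 0 = 0 := by simp [Vpot]
    set R := max 1 ((|c| + 1 + β) * 4 / (β * A)) with hR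
    constructor
    · filter_upwards [eventually_le_atBot (-R)] with r hr
      have : R ≤ |r| := by
        have hR1 : (1:ℝ) ≤ R := le_max_left _ _
        rw [abs_of_nonpos (by linarith)]; linarith
      rw [h0]; exact tail_nonpos hA hβ c this
    · filter_upwards [eventually_ge_atTop R] with r hr
      have : R ≤ |r| := le_trans hr (le_abs_self r)
      rw [h0]; exact tail_nonpos hA hβ c this
  obtain ⟨x0, hx0⟩ := hcont.exists_forall_ge' 0 hev
  exact ⟨_, fun r => hx0 r⟩

lemma integrable_aux (hA : 0 < A) (hβ : 0 < β) (c : ℝ) :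
    Integrable (fun r : ℝ => |r| * Real.exp (c * |r| - β * Vpot A r)) := by
  obtain ⟨K, hK⟩ := exists_bound hA hβ (c + 1)
  have hcont : Continuous fun r : ℝ => |r| * Real.exp (c * |r| - β * Vpot A r) := by
    have := contVpot (A := A); fun_prop
  refine Integrable.mono' ((integrable_exp_neg_mul_sq one_pos).const_mul (Real.exp K))
    hcont.aestronglyMeasurable ?_
  filter_upwards with r
  have h1 : |r| ≤ Real.exp |r| := by
    have := Real.add_one_le_exp |r|; have := abs_nonneg r; linarith
  have h2 : (c + 1) * |r| + r ^ 2 - β * Vpot A r ≤ K := hK r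
  calc ‖|r| * Real.exp (c * |r| - β * Vpot A r)‖
      = |r| * Real.exp (c * |r| - β * Vpot A r) := by
        rw [Real.norm_eq_abs, abs_of_nonneg (by positivity)]
    _ ≤ Real.exp |r| * Real.exp (c * |r| - β * Vpot A r) := by
        gcongr
    _ = Real.exp ((c + 1) * |r| - β * Vpot A r) := by
        rw [← Real.exp_add]; ring_nf
    _ ≤ Real.exp (K - r ^ 2) := Real.exp_le_exp.2 (by linarith)
    _ = Real.exp K * Real.exp (-1 * r ^ 2) := by
        rw [← Real.exp_add]; ring_nf

lemma integrable_f (hA : 0 < A) (hβ : 0 < β) (θ : ℝ) :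
    Integrable (fun r : ℝ => r * Real.exp (-θ * r - β * Vpot A r)) := by
  have hcont : Continuous fun r : ℝ => r * Real.exp (-θ * r - β * Vpot A r) := by
    have := contVpot (A := A); fun_prop
  refine Integrable.mono' (integrable_aux hA hβ |θ|) hcont.aestronglyMeasurable ?_
  filter_upwards with r
  have h1 : -θ * r ≤ |θ| * |r| := le_trans (le_abs_self _) (by rw [abs_mul, abs_neg])
  calc ‖r * Real.exp (-θ * r - β * Vpot A r)‖
      = |r| * Real.exp (-θ * r - β * Vpot A r) := by
        rw [Real.norm_eq_abs, abs_mul, abs_of_nonneg (Real.exp_nonneg _)]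
    _ ≤ |r| * Real.exp (|θ| * |r| - β * Vpot A r) := by
        have h2 : -θ * r - β * Vpot A r ≤ |θ| * |r| - β * Vpot A r := by linarith
        exact mul_le_mul_of_nonneg_left (Real.exp_le_exp.2 h2) (abs_nonneg r)


def F (A β θ : ℝ) : ℝ := ∫ r : ℝ, r * Real.exp (-θ * r - β * Vpot A r)

lemma contF (hA : 0 < A) (hβ : 0 < β) : Continuous (F A β) := by
  rw [continuous_iff_continuousAt]
  intro θ0
  apply continuousAt_of_dominated (bound := fun r : ℝ =>
      |r| * Real.exp ((|θ0| + 1) * |r| - β * Vpot A r))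
  · filter_upwards with θ
    exact (integrable_f hA hβ θ).aestronglyMeasurable
  · filter_upwards [Metric.ball_mem_nhds θ0 one_pos] with θ hθ
    filter_upwards with r
    rw [Metric.mem_ball, Real.dist_eq] at hθ
    have hθ' : |θ| ≤ |θ0| + 1 := by
      have := abs_sub_abs_le_abs_sub θ θ0; linarith
    have h1 : -θ * r ≤ |θ| * |r| := le_trans (le_abs_self _) (by rw [abs_mul, abs_neg])
    have h2 : -θ * r - β * Vpot A r ≤ (|θ0| + 1) * |r| - β * Vpot A r := by
      have : |θ| * |r| ≤ (|θ0| + 1) * |r| := mul_le_mul_of_nonneg_right hθ' (abs_nonneg r)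
      linarith
    calc ‖r * Real.exp (-θ * r - β * Vpot A r)‖
        = |r| * Real.exp (-θ * r - β * Vpot A r) := by
          rw [Real.norm_eq_abs, abs_mul, abs_of_nonneg (Real.exp_nonneg _)]
      _ ≤ |r| * Real.exp ((|θ0| + 1) * |r| - β * Vpot A r) :=
          mul_le_mul_of_nonneg_left (Real.exp_le_exp.2 h2) (abs_nonneg r)
  · exact integrable_aux hA hβ (|θ0| + 1)
  · filter_upwards with r
    have : Continuous fun θ : ℝ => r * Real.exp (-θ * r - β * Vpot A r) := by fun_prop
    exact this.continuousAt

lemma antiF (hA : 0 < A) (hβ : 0 < β) : StrictAnti (F A β) := by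
  intro θ1 θ2 h12
  have hf1 := integrable_f hA hβ (A := A) (β := β) θ1
  have hf2 := integrable_f hA hβ (A := A) (β := β) θ2
  have hsub : 0 < ∫ r : ℝ, (r * Real.exp (-θ1 * r - β * Vpot A r)
      - r * Real.exp (-θ2 * r - β * Vpot A r)) := by
    set g : ℝ → ℝ := fun r => r * Real.exp (-θ1 * r - β * Vpot A r)
      - r * Real.exp (-θ2 * r - β * Vpot A r) with hg
    have hnn : ∀ r, 0 ≤ g r := by
      intro r
      have key : g r = r * (Real.exp (-θ1 * r) - Real.exp (-θ2 * r))
          * Real.exp (-(β * Vpot A r)) := by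
        rw [hg]; simp only [sub_eq_add_neg (-θ1 * r), sub_eq_add_neg (-θ2 * r),
          Real.exp_add]; ring
      rw [key]
      rcases lt_trichotomy r 0 with hr | hr | hr
      · apply mul_nonneg _ (Real.exp_nonneg _)
        have : Real.exp (-θ1 * r) ≤ Real.exp (-θ2 * r) := by
          apply Real.exp_le_exp.2; nlinarith
        nlinarith
      · simp [hr]
      · apply mul_nonneg _ (Real.exp_nonneg _)
        have : Real.exp (-θ2 * r) ≤ Real.exp (-θ1 * r) := by
          apply Real.exp_le_exp.2; nlinarith
        exact mul_nonneg hr.le (by linarith)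
    rw [integral_pos_iff_support_of_nonneg (hnn) (hf1.sub hf2)]
    have hsubset : Set.Ioi (0:ℝ) ⊆ Function.support g := by
      intro r hr
      rw [Set.mem_Ioi] at hr
      have key : g r = r * (Real.exp (-θ1 * r) - Real.exp (-θ2 * r))
          * Real.exp (-(β * Vpot A r)) := by
        rw [hg]; simp only [sub_eq_add_neg (-θ1 * r), sub_eq_add_neg (-θ2 * r),
          Real.exp_add]; ring
      have hlt : Real.exp (-θ2 * r) < Real.exp (-θ1 * r) := by
        apply Real.exp_lt_exp.2; nlinarith
      have : 0 < g r := by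
        rw [key]
        exact mul_pos (mul_pos hr (sub_pos.2 hlt)) (Real.exp_pos _)
      exact Function.mem_support.2 this.ne'
    calc (0 : ENNReal) < volume (Set.Ioi (0:ℝ)) := by simp [Real.volume_Ioi]
      _ ≤ volume (Function.support g) := measure_mono hsubset
  rw [integral_sub hf1 hf2] at hsub
  simp only [F]
  linarith


lemma F_neg (hA : 0 < A) (hβ : 0 < β) : ∃ θ : ℝ, F A β θ < 0 := by
  obtain ⟨K1, hK1⟩ := exists_bound hA hβ 1
  set T := max 1 (K1 + β * (2 + 4 * A) + 1) with hTdef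
  have hT1 : (1:ℝ) ≤ T := le_max_left _ _
  have hT0 : (0:ℝ) < T := lt_of_lt_of_le one_pos hT1
  refine ⟨T, ?_⟩
  have hf := integrable_f (A := A) (β := β) hA hβ T
  set f : ℝ → ℝ := fun r => r * Real.exp (-T * r - β * Vpot A r) with hfdef
  -- the positive part
  have hpos : ∫ r in Ioi (0:ℝ), f r ≤ Real.exp K1 * T⁻¹ := by
    have hmono : ∫ r in Ioi (0:ℝ), f r
        ≤ ∫ r in Ioi (0:ℝ), Real.exp K1 * Real.exp (-T * r) := by
      refine setIntegral_mono_on hf.integrableOn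
        ((exp_neg_integrableOn_Ioi 0 hT0).const_mul _) measurableSet_Ioi ?_
      intro r hr
      rw [mem_Ioi] at hr
      have h1 : r ≤ Real.exp r := by linarith [Real.add_one_le_exp r]
      have h2 : 1 * |r| + r ^ 2 - β * Vpot A r ≤ K1 := hK1 r
      rw [abs_of_pos hr] at h2
      calc f r ≤ Real.exp r * Real.exp (-T * r - β * Vpot A r) :=
            mul_le_mul_of_nonneg_right h1 (Real.exp_nonneg _)
        _ = Real.exp (r + (-T * r - β * Vpot A r)) := by rw [← Real.exp_add]
        _ ≤ Real.exp (K1 + -T * r) := Real.exp_le_exp.2 (by nlinarith [sq_nonneg r])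
        _ = Real.exp K1 * Real.exp (-T * r) := Real.exp_add _ _
    have hval : ∫ r in Ioi (0:ℝ), Real.exp K1 * Real.exp (-T * r) = Real.exp K1 * T⁻¹ := by
      rw [MeasureTheory.integral_const_mul]
      congr 1
      have := integral_comp_mul_left_Ioi (fun x : ℝ => Real.exp (-x)) 0 hT0
      simp only [mul_zero, smul_eq_mul] at this
      simp only [neg_mul] at this ⊢
      rw [this, integral_exp_neg_Ioi]
      simp
    linarith
  -- the negative part
  have hneg : ∫ r in Iic (0:ℝ), f r ≤ -Real.exp (T - β * (2 + 4 * A)) := by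
    have hstep : ∫ r in Icc (-2:ℝ) (-1), -f r ≤ ∫ r in Iic (0:ℝ), -f r := by
      refine setIntegral_mono_set hf.neg.integrableOn ?_ ?_
      · rw [EventuallyLE, ae_restrict_iff' measurableSet_Iic]
        filter_upwards with r hr
        rw [mem_Iic] at hr
        simp only [hfdef, Pi.zero_apply]
        have : r * Real.exp (-T * r - β * Vpot A r) ≤ 0 :=
          mul_nonpos_of_nonpos_of_nonneg hr (Real.exp_nonneg _)
        linarith
      · refine HasSubset.Subset.eventuallyLE ?_
        intro x hx
        exact le_trans hx.2 (by norm_num)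
    have hconst : ∀ r ∈ Icc (-2:ℝ) (-1), Real.exp (T - β * (2 + 4 * A)) ≤ -f r := by
      intro r hr
      obtain ⟨hr1, hr2⟩ := hr
      have hV : Vpot A r ≤ 2 + 4 * A := by
        unfold Vpot
        have h4 : r ^ 2 ≤ 4 := by nlinarith
        have h3 : r ^ 3 ≤ 0 := by nlinarith
        have h16 : r ^ 4 ≤ 16 := by nlinarith [sq_nonneg r, sq_nonneg (r ^ 2 - 4)]
        nlinarith [mul_le_mul_of_nonneg_left h16 hA.le]
      have harg : T - β * (2 + 4 * A) ≤ -T * r - β * Vpot A r := by nlinarith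
      have hE : Real.exp (T - β * (2 + 4 * A)) ≤ Real.exp (-T * r - β * Vpot A r) :=
        Real.exp_le_exp.2 harg
      have hle : r * Real.exp (-T * r - β * Vpot A r) ≤ -Real.exp (-T * r - β * Vpot A r) := by
        nlinarith [Real.exp_pos (-T * r - β * Vpot A r)]
      simp only [hfdef]
      linarith
    have hlo : Real.exp (T - β * (2 + 4 * A)) ≤ ∫ r in Icc (-2:ℝ) (-1), -f r := by
      have hmon := setIntegral_mono_on (integrableOn_const (by
          rw [Real.volume_Icc]; exact ENNReal.ofReal_ne_top))
        hf.neg.integrableOn measurableSet_Icc hconst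
      rw [setIntegral_const] at hmon
      have hv : (volume (Icc (-2:ℝ) (-1))).toReal = 1 := by
        rw [Real.volume_Icc]
        norm_num
      rw [show volume.real (Icc (-2:ℝ) (-1)) = (volume (Icc (-2:ℝ) (-1))).toReal from rfl, hv, one_smul] at hmon
      exact hmon
    have h1 : ∫ r in Icc (-2:ℝ) (-1), -f r = -∫ r in Icc (-2:ℝ) (-1), f r := integral_neg f
    have h2 : ∫ r in Iic (0:ℝ), -f r = -∫ r in Iic (0:ℝ), f r := integral_neg f
    rw [h1, h2] at hstep
    rw [h1] at hlo
    linarith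
  have hsplit := intervalIntegral.integral_Iic_add_Ioi (b := (0:ℝ)) hf.integrableOn hf.integrableOn
  have hFT : F A β T = (∫ r in Iic (0:ℝ), f r) + ∫ r in Ioi (0:ℝ), f r := by
    simp only [F, hfdef]
    exact hsplit.symm
  have hcmp : Real.exp K1 * T⁻¹ < Real.exp (T - β * (2 + 4 * A)) := by
    have hTK : K1 + 1 ≤ T - β * (2 + 4 * A) := by
      have := le_max_right (1:ℝ) (K1 + β * (2 + 4 * A) + 1)
      rw [← hTdef] at this
      linarith
    have hinv : T⁻¹ ≤ 1 := inv_le_one_of_one_le₀ hT1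
    calc Real.exp K1 * T⁻¹ ≤ Real.exp K1 * 1 :=
          mul_le_mul_of_nonneg_left hinv (Real.exp_nonneg _)
      _ = Real.exp K1 := mul_one _
      _ < Real.exp (K1 + 1) := Real.exp_lt_exp.2 (by linarith)
      _ ≤ Real.exp (T - β * (2 + 4 * A)) := Real.exp_le_exp.2 hTK
  rw [hFT]
  linarith


lemma F_pos (hA : 0 < A) (hβ : 0 < β) : ∃ θ : ℝ, 0 < F A β θ := by
  obtain ⟨K1, hK1⟩ := exists_bound hA hβ 1
  set T := max 1 (K1 + β * (5 + 4 * A) + 1) with hTdef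
  have hT1 : (1:ℝ) ≤ T := le_max_left _ _
  have hT0 : (0:ℝ) < T := lt_of_lt_of_le one_pos hT1
  refine ⟨-T, ?_⟩
  have hf := integrable_f (A := A) (β := β) hA hβ (-T)
  set f : ℝ → ℝ := fun r => r * Real.exp (-(-T) * r - β * Vpot A r) with hfdef
  -- value of the reference integral
  have hval : ∫ r in Ioi (0:ℝ), Real.exp K1 * Real.exp (-T * r) = Real.exp K1 * T⁻¹ := by
    rw [MeasureTheory.integral_const_mul]
    congr 1
    have := integral_comp_mul_left_Ioi (fun x : ℝ => Real.exp (-x)) 0 hT0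
    simp only [mul_zero, smul_eq_mul] at this
    simp only [neg_mul] at this ⊢
    rw [this, integral_exp_neg_Ioi]
    simp
  -- the negative (Iic) part is bounded below
  have hneg : -(Real.exp K1 * T⁻¹) ≤ ∫ r in Iic (0:ℝ), f r := by
    have hIic : ∫ r in Iic (0:ℝ), f r = ∫ x in Ioi (0:ℝ), f (-x) := by
      rw [integral_comp_neg_Ioi, neg_zero]
    rw [hIic]
    have hmono : ∫ x in Ioi (0:ℝ), -(Real.exp K1 * Real.exp (-T * x))
        ≤ ∫ x in Ioi (0:ℝ), f (-x) := by
      refine setIntegral_mono_on (((exp_neg_integrableOn_Ioi 0 hT0).const_mul _).neg)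
        hf.comp_neg.integrableOn measurableSet_Ioi ?_
      intro x hx
      rw [mem_Ioi] at hx
      have h1 : x ≤ Real.exp x := by linarith [Real.add_one_le_exp x]
      have h2 : 1 * |(-x)| + (-x) ^ 2 - β * Vpot A (-x) ≤ K1 := hK1 (-x)
      rw [abs_neg, abs_of_pos hx] at h2
      have hfx : f (-x) = -(x * Real.exp (-(T * x) - β * Vpot A (-x))) := by
        simp only [hfdef]
        ring_nf
      rw [hfx]
      have : x * Real.exp (-(T * x) - β * Vpot A (-x)) ≤ Real.exp K1 * Real.exp (-T * x) := by
        calc x * Real.exp (-(T * x) - β * Vpot A (-x))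
            ≤ Real.exp x * Real.exp (-(T * x) - β * Vpot A (-x)) :=
              mul_le_mul_of_nonneg_right h1 (Real.exp_nonneg _)
          _ = Real.exp (x + (-(T * x) - β * Vpot A (-x))) := by rw [← Real.exp_add]
          _ ≤ Real.exp (K1 + -T * x) := Real.exp_le_exp.2 (by nlinarith [sq_nonneg x])
          _ = Real.exp K1 * Real.exp (-T * x) := Real.exp_add _ _
      linarith
    have hnegval : ∫ x in Ioi (0:ℝ), -(Real.exp K1 * Real.exp (-T * x))
        = -(Real.exp K1 * T⁻¹) := by
      rw [integral_neg, hval]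
    linarith
  -- the positive (Ioi) part is bounded below
  have hpos : Real.exp (T - β * (5 + 4 * A)) ≤ ∫ r in Ioi (0:ℝ), f r := by
    have hstep : ∫ r in Icc (1:ℝ) 2, f r ≤ ∫ r in Ioi (0:ℝ), f r := by
      refine setIntegral_mono_set hf.integrableOn ?_ ?_
      · rw [EventuallyLE, ae_restrict_iff' measurableSet_Ioi]
        filter_upwards with r hr
        rw [mem_Ioi] at hr
        simp only [hfdef, Pi.zero_apply]
        positivity
      · refine HasSubset.Subset.eventuallyLE ?_
        intro x hx
        exact lt_of_lt_of_le one_pos hx.1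
    have hconst : ∀ r ∈ Icc (1:ℝ) 2, Real.exp (T - β * (5 + 4 * A)) ≤ f r := by
      intro r hr
      obtain ⟨hr1, hr2⟩ := hr
      have hV : Vpot A r ≤ 5 + 4 * A := by
        unfold Vpot
        have h4 : r ^ 2 ≤ 4 := by nlinarith
        have h8 : r ^ 3 ≤ 8 := by nlinarith
        have h16 : r ^ 4 ≤ 16 := by nlinarith [sq_nonneg r, sq_nonneg (r ^ 2 - 4)]
        nlinarith [mul_le_mul_of_nonneg_left h16 hA.le]
      have harg : T - β * (5 + 4 * A) ≤ -(-T) * r - β * Vpot A r := by nlinarith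
      calc Real.exp (T - β * (5 + 4 * A)) ≤ Real.exp (-(-T) * r - β * Vpot A r) :=
            Real.exp_le_exp.2 harg
        _ ≤ r * Real.exp (-(-T) * r - β * Vpot A r) :=
            le_mul_of_one_le_left (Real.exp_nonneg _) hr1
    have hlo : Real.exp (T - β * (5 + 4 * A)) ≤ ∫ r in Icc (1:ℝ) 2, f r := by
      have hmon := setIntegral_mono_on (integrableOn_const (by
          rw [Real.volume_Icc]; exact ENNReal.ofReal_ne_top))
        hf.integrableOn measurableSet_Icc hconst
      rw [setIntegral_const] at hmon
      have hv : (volume (Icc (1:ℝ) 2)).toReal = 1 := by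
        rw [Real.volume_Icc]
        norm_num
      rw [show volume.real (Icc (1:ℝ) 2) = (volume (Icc (1:ℝ) 2)).toReal from rfl, hv, one_smul] at hmon
      exact hmon
    linarith
  have hsplit := intervalIntegral.integral_Iic_add_Ioi (b := (0:ℝ))
    hf.integrableOn hf.integrableOn
  have hFT : F A β (-T) = (∫ r in Iic (0:ℝ), f r) + ∫ r in Ioi (0:ℝ), f r := by
    simp only [F, hfdef]
    exact hsplit.symm
  have hcmp : Real.exp K1 * T⁻¹ < Real.exp (T - β * (5 + 4 * A)) := by
    have hTK : K1 + 1 ≤ T - β * (5 + 4 * A) := by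
      have := le_max_right (1:ℝ) (K1 + β * (5 + 4 * A) + 1)
      rw [← hTdef] at this
      linarith
    have hinv : T⁻¹ ≤ 1 := inv_le_one_of_one_le₀ hT1
    calc Real.exp K1 * T⁻¹ ≤ Real.exp K1 * 1 :=
          mul_le_mul_of_nonneg_left hinv (Real.exp_nonneg _)
      _ = Real.exp K1 := mul_one _
      _ < Real.exp (K1 + 1) := Real.exp_lt_exp.2 (by linarith)
      _ ≤ Real.exp (T - β * (5 + 4 * A)) := Real.exp_le_exp.2 hTK
  rw [hFT]
  linarith

end Stmt14

/-- the equation `∫ r e^{−θr − βV(r)} dr = 0` has exactly one real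
solution `θ`. -/
theorem stmt14 (A β : ℝ) (hA : 0 < A) (hβ : 0 < β) :
    ∃! θ : ℝ, (∫ r : ℝ, r * Real.exp (-θ * r - β * Vpot A r)) = 0 := by
  obtain ⟨T1, hT1⟩ := Stmt14.F_neg hA hβ
  obtain ⟨T0, hT0⟩ := Stmt14.F_pos hA hβ
  have hanti := Stmt14.antiF hA hβ
  have hcont := Stmt14.contF hA hβ
  have hlt : T0 ≤ T1 := by
    by_contra h
    push_neg at h
    have := hanti h
    linarith
  obtain ⟨θ, hθmem, hθ⟩ := intermediate_value_Icc' hlt hcont.continuousOn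
    (show (0:ℝ) ∈ Set.Icc (Stmt14.F A β T1) (Stmt14.F A β T0) from ⟨hT1.le, hT0.le⟩)
  refine ⟨θ, hθ, fun y hy => ?_⟩
  exact hanti.injective (show Stmt14.F A β y = Stmt14.F A β θ from hy.trans hθ.symm)

end
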